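/- For integers n ≥ 2, m ≥ 1 and 0 ≤ k ≤ n, the alternating-sum relation Σ_{i=0}^{k} C(n,i)·C(mn−1,i)·C(n−i, n−k) = C(n,k)·C(mn+k−1, k) holds; that is, the f-numbers f⁺_{k−1}(B_n, m) = C(n,k)·C(mn+k−1,k) are determined from the h-numbers h⁺ᵢ(B_n, m) = C(n,i)·C(mn−1,i) by the standard f-h relation Σ_{i=0}^{n} f⁺_{i−1}(x−1)^{n−i} = Σ_{i=0}^{n} h⁺ᵢ x^{n−i}. -/

import Mathlib

/-- The f-numbers `f⁺_{k−1}(B_n, m) = C(n,k)·C(mn+k−1,k)` are determined from the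
h-numbers `h⁺ᵢ(B_n, m) = C(n,i)·C(mn−1,i)` by the standard f-h relation
`f⁺_{k−1} = Σ_{i=0}^{k} h⁺ᵢ·C(n−i, n−k)`. -/
theorem fh_relation_typeB (m n k : ℕ) (hn : 2 ≤ n) (hm : 1 ≤ m) (hk : k ≤ n) :
    ∑ i ∈ Finset.range (k + 1),
        n.choose i * (m * n - 1).choose i * (n - i).choose (n - k)
      = n.choose k * (m * n + k - 1).choose k := by
  set N := m * n - 1 with hN
  have hmn : 1 ≤ m * n := Nat.mul_pos hm (by omega)
  have h1 : m * n + k - 1 = N + k := by omega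
  rw [h1, Nat.add_choose_eq, Finset.Nat.sum_antidiagonal_eq_sum_range_succ_mk,
    Finset.mul_sum]
  refine Finset.sum_congr rfl fun i hi => ?_
  have hik : i ≤ k := Nat.lt_succ_iff.mp (Finset.mem_range.mp hi)
  have e1 : (n - i).choose (n - k) = (n - i).choose (k - i) := by
    rw [← Nat.choose_symm (by omega)]
    congr 1
    omega
  have e2 : n.choose i * (n - i).choose (k - i) = n.choose k * k.choose i :=
    (Nat.choose_mul (n := n) hik).symm
  rw [e1, mul_right_comm, e2, ← Nat.choose_symm hik]
  ring
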